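/- Let n ≥ 5 and let λ be the Lie multiplication gₙ,₂ on ℂⁿ. Then Der(λ) has dimension n² − 3n + 4, there exists an abelian ideal of λ of dimension n − 1, and every abelian ideal of λ has dimension at most n − 1. -/

import Mathlib

noncomputable section

abbrev V (n : ℕ) : Type := Fin n → ℂ

abbrev Bil (n : ℕ) : Type := V n →ₗ[ℂ] V n →ₗ[ℂ] V n

instance BilTop (n : ℕ) : TopologicalSpace (Bil n) :=
  TopologicalSpace.induced (fun μ : Bil n => fun x y : V n => μ x y) inferInstance

/-- The change-of-basis action of a linear automorphism on multiplications. -/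
def act {n : ℕ} (g : V n ≃ₗ[ℂ] V n) (μ : Bil n) : Bil n :=
  LinearMap.mk₂ ℂ (fun x y => g (μ (g.symm x) (g.symm y)))
    (fun x x' y => by simp)
    (fun c x y => by simp)
    (fun x y y' => by simp)
    (fun c x y => by simp)

/-- The orbit of a multiplication under the change-of-basis action. -/
def orb {n : ℕ} (μ : Bil n) : Set (Bil n) :=
  Set.range fun g : V n ≃ₗ[ℂ] V n => act g μ

/-- Two multiplications are isomorphic iff they lie in the same orbit. -/
def Isom {n : ℕ} (μ ν : Bil n) : Prop := ∃ g : V n ≃ₗ[ℂ] V n, act g μ = ν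

def levelOne {n : ℕ} (lam : Bil n) : Prop :=
  lam ≠ 0 ∧ closure (orb lam) ⊆ orb lam ∪ {0}

def levelTwo {n : ℕ} (lam : Bil n) : Prop :=
  (∀ μ ∈ closure (orb lam) \ orb lam, closure (orb μ) ⊆ orb μ ∪ {0}) ∧
  ∃ μ ∈ closure (orb lam) \ orb lam, μ ≠ 0

/-- `E n k` is the standard basis vector `e_{k+1}` of `ℂⁿ` (0-indexed `k`). -/
def E (n k : ℕ) : V n := fun m => if (m : ℕ) = k then 1 else 0

/-- The bilinear multiplication determined by a table of products of basis vectors. -/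
def ofTable {n : ℕ} (c : Fin n → Fin n → V n) : Bil n :=
  LinearMap.mk₂ ℂ (fun x y => ∑ i : Fin n, ∑ j : Fin n, (x i * y j) • c i j)
    (fun x x' y => by
      simp [add_mul, add_smul, Finset.sum_add_distrib])
    (fun a x y => by
      simp [Finset.smul_sum, smul_smul, mul_assoc])
    (fun x y y' => by
      simp [mul_add, add_smul, Finset.sum_add_distrib])
    (fun a x y => by
      simp [Finset.smul_sum, smul_smul, mul_assoc, mul_left_comm])

def JordanMul {n : ℕ} (lam : Bil n) : Prop :=
  (∀ x y : V n, lam x y = lam y x) ∧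
  ∀ x y : V n, lam (lam x x) (lam y x) = lam (lam (lam x x) y) x

def LieMul {n : ℕ} (lam : Bil n) : Prop :=
  (∀ x : V n, lam x x = 0) ∧
  ∀ x y z : V n, lam x (lam y z) + lam y (lam z x) + lam z (lam x y) = 0

def AssocMul {n : ℕ} (lam : Bil n) : Prop :=
  ∀ x y z : V n, lam (lam x y) z = lam x (lam y z)
/-- The space of derivations of a multiplication. -/
def Der {n : ℕ} (lam : Bil n) : Submodule ℂ (Module.End ℂ (V n)) where
  carrier := { D | ∀ x y : V n, D (lam x y) = lam (D x) y + lam x (D y) }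
  add_mem' := by
    intro a b ha hb x y
    simp only [LinearMap.add_apply, ha x y, hb x y, map_add, LinearMap.add_apply]
    abel
  zero_mem' := by intro x y; simp
  smul_mem' := by
    intro c a ha x y
    simp only [LinearMap.smul_apply, ha x y, map_smul, smul_add, LinearMap.smul_apply]

/-- `I` is an abelian ideal of the (Lie) multiplication `lam`. -/
def IsAbelianIdeal {n : ℕ} (lam : Bil n) (I : Submodule ℂ (V n)) : Prop :=
  (∀ x : V n, ∀ v ∈ I, lam x v ∈ I) ∧ ∀ v ∈ I, ∀ w ∈ I, lam v w = 0
/-- `n₅,₁ ⊕ 𝔞_{n-5}`: `[e₁,e₃] = e₅`, `[e₂,e₄] = e₅`. -/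
def n51 (n : ℕ) : Bil n :=
  ofTable fun i j =>
    if i.val = 0 ∧ j.val = 2 then E n 4
    else if i.val = 2 ∧ j.val = 0 then -E n 4
    else if i.val = 1 ∧ j.val = 3 then E n 4
    else if i.val = 3 ∧ j.val = 1 then -E n 4
    else 0

/-- `n₅,₂ ⊕ 𝔞_{n-5}`: `[e₁,e₂] = e₄`, `[e₁,e₃] = e₅`. -/
def n52 (n : ℕ) : Bil n :=
  ofTable fun i j =>
    if i.val = 0 ∧ j.val = 1 then E n 3
    else if i.val = 1 ∧ j.val = 0 then -E n 3
    else if i.val = 0 ∧ j.val = 2 then E n 4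
    else if i.val = 2 ∧ j.val = 0 then -E n 4
    else 0

/-- `r₂ ⊕ 𝔞_{n-2}`: `[e₁,e₂] = e₂`. -/
def r2 (n : ℕ) : Bil n :=
  ofTable fun i j =>
    if i.val = 0 ∧ j.val = 1 then E n 1
    else if i.val = 1 ∧ j.val = 0 then -E n 1
    else 0

/-- `g_{n,1}(α)`: `[e₁,e₂] = α e₂`, `[e₁,eᵢ] = eᵢ` for `3 ≤ i ≤ n`. -/
def g1 (n : ℕ) (α : ℂ) : Bil n :=
  ofTable fun i j =>
    if i.val = 0 ∧ j.val = 1 then α • E n 1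
    else if i.val = 1 ∧ j.val = 0 then -(α • E n 1)
    else if i.val = 0 ∧ 2 ≤ j.val then E n j.val
    else if j.val = 0 ∧ 2 ≤ i.val then -E n i.val
    else 0

/-- `g_{n,2}`: `[e₁,e₂] = e₂ + e₃`, `[e₁,eᵢ] = eᵢ` for `3 ≤ i ≤ n`. -/
def g2 (n : ℕ) : Bil n :=
  ofTable fun i j =>
    if i.val = 0 ∧ j.val = 1 then E n 1 + E n 2
    else if i.val = 1 ∧ j.val = 0 then -(E n 1 + E n 2)
    else if i.val = 0 ∧ 2 ≤ j.val then E n j.val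
    else if j.val = 0 ∧ 2 ≤ i.val then -E n i.val
    else 0


lemma mem_der_iff' {n : ℕ} (lam : Bil n) (D : Module.End ℂ (V n)) :
    D ∈ Der lam ↔ ∀ x y : V n, D (lam x y) = lam (D x) y + lam x (D y) := Iff.rfl

lemma E_eq_single {n k : ℕ} (h : k < n) : E n k = Pi.single (⟨k, h⟩ : Fin n) 1 := by
  funext m; simp [E, Pi.single_apply, Fin.ext_iff]

lemma ofTable_single {n : ℕ} (c : Fin n → Fin n → V n) (a b : Fin n) :
    ofTable c (Pi.single a 1) (Pi.single b 1) = c a b := by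
  simp [ofTable, Pi.single_apply, ite_mul, one_mul, zero_mul, ite_smul,
    Finset.sum_ite_eq]

def Amap {n : ℕ} (hn : 5 ≤ n) : V n →ₗ[ℂ] V n where
  toFun y := fun k => if k.val = 2 then y ⟨1, by omega⟩ + y ⟨2, by omega⟩
    else if k.val = 0 then 0 else y k
  map_add' x y := by
    funext k
    by_cases h : k.val = 2 <;> by_cases h0 : k.val = 0 <;> simp [h, h0] <;> ring
  map_smul' c x := by
    funext k
    by_cases h : k.val = 2 <;> by_cases h0 : k.val = 0 <;> simp [h, h0] <;> ring

lemma Amap_apply {n : ℕ} (hn : 5 ≤ n) (y : V n) (k : Fin n) :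
    Amap hn y k = if k.val = 2 then y ⟨1, by omega⟩ + y ⟨2, by omega⟩
      else if k.val = 0 then 0 else y k := rfl

lemma Amap_single0 {n : ℕ} (hn : 5 ≤ n) :
    Amap hn (Pi.single (⟨0, by omega⟩ : Fin n) 1) = 0 := by
  funext k
  rw [Amap_apply]
  simp only [Pi.single_apply, Fin.ext_iff, Pi.zero_apply]
  split_ifs <;> solve | rfl | omega | exact (by assumption : False).elim | norm_num | (norm_num; omega)

lemma Amap_single1 {n : ℕ} (hn : 5 ≤ n) :
    Amap hn (Pi.single (⟨1, by omega⟩ : Fin n) 1) =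
      Pi.single (⟨1, by omega⟩ : Fin n) 1 + Pi.single (⟨2, by omega⟩ : Fin n) 1 := by
  funext k
  rw [Amap_apply]
  simp only [Pi.single_apply, Fin.ext_iff, Pi.add_apply]
  split_ifs <;> solve | rfl | omega | exact (by assumption : False).elim | norm_num | (norm_num; omega)

lemma Amap_single_ge {n : ℕ} (hn : 5 ≤ n) (b : Fin n) (hb : 2 ≤ b.val) :
    Amap hn (Pi.single b 1) = Pi.single b 1 := by
  funext k
  rw [Amap_apply]
  simp only [Pi.single_apply, Fin.ext_iff]
  split_ifs <;> solve | rfl | omega | exact (by assumption : False).elim | norm_num | (norm_num; omega)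

def G {n : ℕ} (hn : 5 ≤ n) : Bil n :=
  LinearMap.mk₂ ℂ
    (fun x y => x ⟨0, by omega⟩ • Amap hn y - y ⟨0, by omega⟩ • Amap hn x)
    (fun x x' y => by simp [add_smul, smul_add]; module)
    (fun c x y => by simp [smul_smul, smul_sub]; module)
    (fun x y y' => by simp [add_smul, smul_add]; module)
    (fun c x y => by simp [smul_smul, smul_sub]; module)

lemma g2_eq {n : ℕ} (hn : 5 ≤ n) : g2 n = G hn := by
  apply LinearMap.ext_basis (Pi.basisFun ℂ (Fin n)) (Pi.basisFun ℂ (Fin n))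
  intro a b
  simp only [Pi.basisFun_apply]
  rw [show g2 n = ofTable _ from rfl, ofTable_single]
  funext k
  rcases a with ⟨av, ha⟩; rcases b with ⟨bv, hb⟩; rcases k with ⟨kv, hk⟩
  simp only [G, LinearMap.mk₂_apply, Pi.sub_apply, Pi.smul_apply, smul_eq_mul,
    Amap_apply hn, Pi.single_apply, Fin.mk.injEq, Pi.add_apply, Pi.neg_apply,
    Pi.zero_apply, E]
  split_ifs <;>
    solve
      | rfl | omega | exact (by assumption : False).elim
      | (norm_num [E, Pi.add_apply, Pi.neg_apply, Pi.zero_apply] <;>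
          (try split_ifs) <;> solve | rfl | norm_num | omega)

lemma g2_apply {n : ℕ} (hn : 5 ≤ n) (x y : V n) :
    g2 n x y = x ⟨0, by omega⟩ • Amap hn y - y ⟨0, by omega⟩ • Amap hn x := by
  rw [g2_eq hn]; rfl

lemma Amap_at0 {n : ℕ} (hn : 5 ≤ n) (w : V n) : Amap hn w ⟨0, by omega⟩ = 0 := by
  rw [Amap_apply]; norm_num

lemma Amap_at1 {n : ℕ} (hn : 5 ≤ n) (w : V n) :
    Amap hn w ⟨1, by omega⟩ = w ⟨1, by omega⟩ := by
  rw [Amap_apply]; norm_num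

lemma Amap_at2 {n : ℕ} (hn : 5 ≤ n) (w : V n) :
    Amap hn w ⟨2, by omega⟩ = w ⟨1, by omega⟩ + w ⟨2, by omega⟩ := by
  rw [Amap_apply]; norm_num

lemma Amap_at3 {n : ℕ} (hn : 5 ≤ n) (w : V n) :
    Amap hn w ⟨3, by omega⟩ = w ⟨3, by omega⟩ := by
  rw [Amap_apply]; norm_num

theorem mem_der_iff {n : ℕ} (hn : 5 ≤ n) (D : Module.End ℂ (V n)) :
    D ∈ Der (g2 n) ↔
      ((∀ x : V n, D x ⟨0, by omega⟩ = 0) ∧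
        ∀ x : V n, x ⟨0, by omega⟩ = 0 → D (Amap hn x) = Amap hn (D x)) := by
  rw [mem_der_iff']
  constructor
  · intro h
    have h0 : (Pi.single (⟨0, by omega⟩ : Fin n) (1:ℂ) : V n) ⟨0, by omega⟩ = 1 := by
      simp [Pi.single_apply]
    have hstar : ∀ y : V n, y ⟨0, by omega⟩ = 0 →
        D (Amap hn y) = (D (Pi.single ⟨0, by omega⟩ 1)) ⟨0, by omega⟩ • Amap hn y
          + Amap hn (D y) := by
      intro y hy
      have hx := h (Pi.single ⟨0, by omega⟩ 1) y
      rw [g2_apply hn, g2_apply hn, g2_apply hn, hy, Amap_single0 hn, h0] at hx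
      simp only [one_smul, zero_smul, smul_zero, sub_zero] at hx
      exact hx
    have hu := hstar (Pi.single ⟨1, by omega⟩ 1) (by simp [Pi.single_apply])
    have hv := hstar (Pi.single ⟨2, by omega⟩ 1) (by simp [Pi.single_apply])
    rw [Amap_single1 hn, map_add] at hu
    rw [Amap_single_ge hn _ (by norm_num)] at hv
    have hu1 := congrFun hu ⟨1, by omega⟩
    have hv2 := congrFun hv ⟨2, by omega⟩
    simp only [Pi.add_apply, Pi.smul_apply, smul_eq_mul, Amap_at1 hn, Amap_at2 hn,
      Pi.single_apply] at hu1 hv2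
    norm_num at hu1 hv2
    have hα : (D (Pi.single ⟨0, by omega⟩ 1)) ⟨0, by omega⟩ = 0 := by
      linear_combination (-(1:ℂ)/2) * hu1 + (-(1:ℂ)/2) * hv2
    have hss : ∀ x y : V n, x ⟨0, by omega⟩ = 0 → y ⟨0, by omega⟩ = 0 →
        (D x) ⟨0, by omega⟩ • Amap hn y = (D y) ⟨0, by omega⟩ • Amap hn x := by
      intro x y hx0 hy0
      have hx := h x y
      rw [g2_apply hn, g2_apply hn, g2_apply hn, hx0, hy0] at hx
      simp only [zero_smul, sub_zero, zero_sub, map_zero, map_neg] at hx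
      have h' := hx.symm
      rw [← sub_eq_add_neg] at h'
      exact sub_eq_zero.mp h'
    have h3 : (D (Pi.single ⟨3, by omega⟩ 1)) ⟨0, by omega⟩ = 0 := by
      have hq := hss (Pi.single ⟨3, by omega⟩ 1) (Pi.single ⟨1, by omega⟩ 1)
        (by simp [Pi.single_apply]) (by simp [Pi.single_apply])
      rw [Amap_single1 hn, Amap_single_ge hn _ (by norm_num)] at hq
      have hq1 := congrFun hq ⟨1, by omega⟩
      simpa [Pi.single_apply, Pi.add_apply, Pi.smul_apply] using hq1
    have hrow' : ∀ x : V n, x ⟨0, by omega⟩ = 0 → D x ⟨0, by omega⟩ = 0 := by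
      intro x hx0
      have hq := hss x (Pi.single ⟨3, by omega⟩ 1) hx0 (by simp [Pi.single_apply])
      rw [Amap_single_ge hn _ (by norm_num), h3, zero_smul] at hq
      have hq3 := congrFun hq ⟨3, by omega⟩
      simpa [Pi.single_apply, Pi.smul_apply] using hq3
    constructor
    · intro x
      have hdec : D x = x ⟨0, by omega⟩ • D (Pi.single ⟨0, by omega⟩ 1)
          + D (x - x ⟨0, by omega⟩ • (Pi.single ⟨0, by omega⟩ 1 : V n)) := by
        rw [← map_smul, ← map_add]
        congr 1
        abel
      have hx0' : (x - x ⟨0, by omega⟩ • (Pi.single ⟨0, by omega⟩ 1 : V n)) ⟨0, by omega⟩ = 0 := by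
        simp [Pi.single_apply]
      rw [hdec]
      simp only [Pi.add_apply, Pi.smul_apply, smul_eq_mul, hrow' _ hx0', hα, mul_zero, add_zero]
    · intro x hx0
      have hs := hstar x hx0
      rw [hα, zero_smul, zero_add] at hs
      exact hs
  · rintro ⟨hrow, hcomm⟩ x y
    rw [g2_apply hn, g2_apply hn, g2_apply hn]
    have key : ∀ z : V n, D (Amap hn z)
        = Amap hn (D z) - z ⟨0, by omega⟩ • Amap hn (D (Pi.single ⟨0, by omega⟩ 1)) := by
      intro z
      have hz0 : (z - z ⟨0, by omega⟩ • (Pi.single ⟨0, by omega⟩ 1 : V n)) ⟨0, by omega⟩ = 0 := by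
        simp [Pi.single_apply]
      have h2 := hcomm _ hz0
      rw [map_sub, map_smul, Amap_single0 hn, smul_zero, sub_zero] at h2
      rw [h2, map_sub, map_smul, map_sub, map_smul]
    rw [map_sub, map_smul, map_smul, key x, key y, hrow x, hrow y]
    simp only [zero_smul, sub_zero, zero_sub]
    module

abbrev ix (n : ℕ) : Type := Fin (n-1) ⊕ (Fin (n-1) ⊕ Fin (n-2) × Fin (n-3))

def Mdef {n : ℕ} (hn : 5 ≤ n) (f : ix n → ℂ) : Matrix (Fin n) (Fin n) ℂ :=
  Matrix.of fun i j =>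
    if i.val = 0 then 0
    else if j.val = 0 then f (Sum.inl ⟨i.val - 1, by have := i.isLt; omega⟩)
    else if j.val = 1 then f (Sum.inr (Sum.inl ⟨i.val - 1, by have := i.isLt; omega⟩))
    else if j.val = 2 then
      (if i.val = 2 then f (Sum.inr (Sum.inl ⟨0, by omega⟩)) else 0)
    else if i.val = 1 then 0
    else f (Sum.inr (Sum.inr (⟨i.val - 2, by have := i.isLt; omega⟩,
      ⟨j.val - 3, by have := j.isLt; omega⟩)))

def matrixOf {n : ℕ} (hn : 5 ≤ n) : (ix n → ℂ) →ₗ[ℂ] Matrix (Fin n) (Fin n) ℂ where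
  toFun := Mdef hn
  map_add' f g := by
    funext i j
    simp only [Mdef, Matrix.of_apply, Pi.add_apply, Matrix.add_apply]
    split_ifs <;> simp
  map_smul' c f := by
    funext i j
    simp only [Mdef, Matrix.of_apply, Pi.smul_apply, RingHom.id_apply, Matrix.smul_apply,
      smul_eq_mul]
    split_ifs <;> simp

def psi0 {n : ℕ} (hn : 5 ≤ n) : (ix n → ℂ) →ₗ[ℂ] Module.End ℂ (V n) :=
  (Matrix.toLin'.toLinearMap : Matrix (Fin n) (Fin n) ℂ →ₗ[ℂ] _) ∘ₗ matrixOf hn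

lemma psi0_apply {n : ℕ} (hn : 5 ≤ n) (f : ix n → ℂ) (x : V n) :
    psi0 hn f x = (Mdef hn f).mulVec x := by
  simp [psi0, matrixOf, Matrix.toLin'_apply]; rfl

lemma Mdef_apply {n : ℕ} (hn : 5 ≤ n) (f : ix n → ℂ) (i j : Fin n) :
    Mdef hn f i j =
      if i.val = 0 then 0
      else if j.val = 0 then f (Sum.inl ⟨i.val - 1, by have := i.isLt; omega⟩)
      else if j.val = 1 then f (Sum.inr (Sum.inl ⟨i.val - 1, by have := i.isLt; omega⟩))
      else if j.val = 2 then
        (if i.val = 2 then f (Sum.inr (Sum.inl ⟨0, by omega⟩)) else 0)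
      else if i.val = 1 then 0
      else f (Sum.inr (Sum.inr (⟨i.val - 2, by have := i.isLt; omega⟩,
        ⟨j.val - 3, by have := j.isLt; omega⟩))) := rfl

lemma psi0_row0 {n : ℕ} (hn : 5 ≤ n) (f : ix n → ℂ) (x : V n) :
    psi0 hn f x ⟨0, by omega⟩ = 0 := by
  rw [psi0_apply]
  simp only [Matrix.mulVec, dotProduct]
  rw [Finset.sum_eq_zero]
  intro j _
  rw [Mdef_apply]
  norm_num

lemma psi0_comm {n : ℕ} (hn : 5 ≤ n) (f : ix n → ℂ) (x : V n)
    (hx : x ⟨0, by omega⟩ = 0) :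
    psi0 hn f (Amap hn x) = Amap hn (psi0 hn f x) := by
  rw [psi0_apply, psi0_apply]
  have hAx : ∀ j : Fin n, Amap hn x j
      = x j + (if j = (⟨2, by omega⟩ : Fin n) then x ⟨1, by omega⟩ else 0) := by
    intro j
    rw [Amap_apply]
    rcases j with ⟨jv, hj⟩
    simp only [Fin.mk.injEq]
    split_ifs with h1 h2
    · subst h1; exact add_comm _ _
    · subst h2; rw [hx, zero_add]
    · exact (add_zero _).symm
  have hsum : ∀ i : Fin n, (Mdef hn f).mulVec (Amap hn x) i
      = (Mdef hn f).mulVec x i + Mdef hn f i ⟨2, by omega⟩ * x ⟨1, by omega⟩ := by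
    intro i
    simp only [Matrix.mulVec, dotProduct]
    rw [Finset.sum_congr rfl (fun j _ => by rw [hAx j, mul_add]), Finset.sum_add_distrib]
    congr 1
    rw [Finset.sum_eq_single (⟨2, by omega⟩ : Fin n)]
    · rw [if_pos rfl]
    · intro b _ hb; rw [if_neg hb, mul_zero]
    · intro habs; exact absurd (Finset.mem_univ _) habs
  funext i
  rw [hsum i]
  by_cases h0 : i.val = 0
  · have hi : i = ⟨0, by omega⟩ := Fin.ext h0
    rw [hi, Amap_at0 hn]
    have hz : ∀ j : Fin n, Mdef hn f ⟨0, by omega⟩ j = 0 := by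
      intro j; rw [Mdef_apply]; norm_num
    simp only [Matrix.mulVec, dotProduct]
    rw [Finset.sum_eq_zero (fun j _ => by rw [hz j, zero_mul]), hz, zero_mul, add_zero]
  by_cases h2 : i.val = 2
  · have hi : i = ⟨2, by omega⟩ := Fin.ext h2
    rw [hi, Amap_at2 hn]
    have hrow1 : (Mdef hn f).mulVec x ⟨1, by omega⟩
        = Mdef hn f ⟨2, by omega⟩ ⟨2, by omega⟩ * x ⟨1, by omega⟩ := by
      simp only [Matrix.mulVec, dotProduct]
      rw [Finset.sum_eq_single (⟨1, by omega⟩ : Fin n)]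
      · congr 1
      · intro b _ hb
        rcases b with ⟨bv, hb'⟩
        by_cases hb0 : bv = 0
        · subst hb0
          have hx0 : x ⟨0, hb'⟩ = 0 := hx
          rw [hx0, mul_zero]
        · have : Mdef hn f ⟨1, by omega⟩ ⟨bv, hb'⟩ = 0 := by
            rw [Mdef_apply]
            have hbv1 : bv ≠ 1 := by
              intro hh; exact hb (by subst hh; rfl)
            norm_num [hb0, hbv1]
          rw [this, zero_mul]
      · intro habs; exact absurd (Finset.mem_univ _) habs
    rw [hrow1]
    have h22 : Mdef hn f ⟨2, by omega⟩ ⟨2, by omega⟩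
        = Mdef hn f ⟨2, by omega⟩ ⟨2, by omega⟩ := rfl
    ring
  · have hA : Amap hn ((Mdef hn f).mulVec x) i = (Mdef hn f).mulVec x i := by
      rw [Amap_apply, if_neg h2, if_neg h0]
    rw [hA]
    have hz : Mdef hn f i ⟨2, by omega⟩ = 0 := by
      rw [Mdef_apply, if_neg h0]
      norm_num
      intro hc
      exact absurd hc h2
    rw [hz, zero_mul, add_zero]

def phi {n : ℕ} (hn : 5 ≤ n) : ↥(Der (g2 n)) →ₗ[ℂ] (ix n → ℂ) where
  toFun D t :=
    match t with
    | Sum.inl k => (D : Module.End ℂ (V n)) (Pi.single ⟨0, by omega⟩ 1)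
        ⟨k.val + 1, by have := k.isLt; omega⟩
    | Sum.inr (Sum.inl k) => (D : Module.End ℂ (V n)) (Pi.single ⟨1, by omega⟩ 1)
        ⟨k.val + 1, by have := k.isLt; omega⟩
    | Sum.inr (Sum.inr (k, l)) => (D : Module.End ℂ (V n)) (Pi.single ⟨l.val + 3, by have := l.isLt; omega⟩ 1)
        ⟨k.val + 2, by have := k.isLt; omega⟩
  map_add' D1 D2 := by
    funext t
    rcases t with k | k | ⟨k, l⟩ <;> simp
  map_smul' c D := by
    funext t
    rcases t with k | k | ⟨k, l⟩ <;> simp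

lemma phi_inl {n : ℕ} (hn : 5 ≤ n) (D : ↥(Der (g2 n))) (k : Fin (n-1)) :
    phi hn D (Sum.inl k) = (D : Module.End ℂ (V n)) (Pi.single ⟨0, by omega⟩ 1)
        ⟨k.val + 1, by have := k.isLt; omega⟩ := rfl

lemma phi_inr1 {n : ℕ} (hn : 5 ≤ n) (D : ↥(Der (g2 n))) (k : Fin (n-1)) :
    phi hn D (Sum.inr (Sum.inl k)) = (D : Module.End ℂ (V n)) (Pi.single ⟨1, by omega⟩ 1)
        ⟨k.val + 1, by have := k.isLt; omega⟩ := rfl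

lemma phi_inr2 {n : ℕ} (hn : 5 ≤ n) (D : ↥(Der (g2 n))) (k : Fin (n-2)) (l : Fin (n-3)) :
    phi hn D (Sum.inr (Sum.inr (k, l))) =
      (D : Module.End ℂ (V n)) (Pi.single ⟨l.val + 3, by have := l.isLt; omega⟩ 1)
        ⟨k.val + 2, by have := k.isLt; omega⟩ := rfl

lemma mulVec_single1 {n : ℕ} (M : Matrix (Fin n) (Fin n) ℂ) (c : Fin n) (i : Fin n) :
    M.mulVec (Pi.single c 1) i = M i c := by
  simp [Matrix.mulVec_single]

def psi {n : ℕ} (hn : 5 ≤ n) : (ix n → ℂ) →ₗ[ℂ] ↥(Der (g2 n)) :=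
  (psi0 hn).codRestrict (Der (g2 n)) fun f =>
    (mem_der_iff hn _).mpr ⟨fun x => psi0_row0 hn f x, fun x hx => psi0_comm hn f x hx⟩

lemma phi_psi {n : ℕ} (hn : 5 ≤ n) (f : ix n → ℂ) : phi hn (psi hn f) = f := by
  funext t
  have hval : ((psi hn f : ↥(Der (g2 n))) : Module.End ℂ (V n)) = psi0 hn f := rfl
  rcases t with k | k | ⟨k, l⟩
  · rw [phi_inl, hval, psi0_apply, mulVec_single1, Mdef_apply]
    rw [if_neg (by simp), if_pos rfl]
    exact congrArg f (congrArg Sum.inl (Fin.ext (by simp)))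
  · rw [phi_inr1, hval, psi0_apply, mulVec_single1, Mdef_apply]
    rw [if_neg (by simp), if_neg (by norm_num), if_pos rfl]
    exact congrArg f (congrArg Sum.inr (congrArg Sum.inl (Fin.ext (by simp))))
  · rw [phi_inr2, hval, psi0_apply, mulVec_single1, Mdef_apply]
    rw [if_neg (by simp),
      if_neg (show ¬(l.val + 3 = 0) by omega),
      if_neg (show ¬(l.val + 3 = 1) by omega),
      if_neg (show ¬(l.val + 3 = 2) by omega),
      if_neg (show ¬(k.val + 2 = 1) by omega)]
    exact congrArg f (congrArg Sum.inr (congrArg Sum.inr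
      (Prod.ext (Fin.ext (by simp)) (Fin.ext (by simp)))))

lemma psi0_phi {n : ℕ} (hn : 5 ≤ n) (D : ↥(Der (g2 n))) :
    psi0 hn (phi hn D) = (D : Module.End ℂ (V n)) := by
  obtain ⟨hrow, hcomm⟩ := (mem_der_iff hn (D : Module.End ℂ (V n))).mp D.2
  have fact2 : ∀ i : Fin n, (D : Module.End ℂ (V n)) (Pi.single ⟨2, by omega⟩ 1) i
      = if i.val = 2 then (D : Module.End ℂ (V n)) (Pi.single ⟨1, by omega⟩ 1) ⟨1, by omega⟩
        else 0 := by
    intro i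
    have h2 := hcomm (Pi.single ⟨1, by omega⟩ 1) (by simp [Pi.single_apply])
    rw [Amap_single1 hn, map_add] at h2
    have hc := congrFun h2 i
    rw [Pi.add_apply, Amap_apply] at hc
    by_cases hi2 : i.val = 2
    · rw [if_pos hi2] at hc ⊢
      have hieq : i = ⟨2, by omega⟩ := Fin.ext hi2
      rw [hieq] at hc ⊢
      linear_combination hc
    · rw [if_neg hi2] at hc ⊢
      by_cases hi0 : i.val = 0
      · have hieq : i = ⟨0, by omega⟩ := Fin.ext hi0
        rw [hieq]
        exact hrow _
      · rw [if_neg hi0] at hc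
        linear_combination hc
  have fact3 : ∀ a : Fin n, 3 ≤ a.val →
      (D : Module.End ℂ (V n)) (Pi.single a 1) ⟨1, by omega⟩ = 0 := by
    intro a ha
    have h2 := hcomm (Pi.single a 1) (by
      simp [Pi.single_apply, Fin.ext_iff]
      omega)
    rw [Amap_single_ge hn _ (by omega)] at h2
    have hc := congrFun h2 ⟨2, by omega⟩
    rw [Amap_at2 hn] at hc
    linear_combination -hc
  refine Module.Basis.ext (Pi.basisFun ℂ (Fin n)) fun a => ?_
  simp only [Pi.basisFun_apply]
  funext i
  rw [psi0_apply, mulVec_single1, Mdef_apply]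
  by_cases hi0 : i.val = 0
  · rw [if_pos hi0]
    have hieq : i = ⟨0, by omega⟩ := Fin.ext hi0
    rw [hieq]
    exact (hrow _).symm
  rw [if_neg hi0]
  by_cases ha0 : a.val = 0
  · rw [if_pos ha0, phi_inl]
    have h1 : (⟨i.val - 1 + 1, by have := i.isLt; omega⟩ : Fin n) = i := Fin.ext (by simp; omega)
    have h2 : (⟨0, by omega⟩ : Fin n) = a := (Fin.ext ha0).symm
    rw [h1, h2]
  by_cases ha1 : a.val = 1
  · rw [if_neg (by omega), if_pos ha1, phi_inr1]
    have h1 : (⟨i.val - 1 + 1, by have := i.isLt; omega⟩ : Fin n) = i := Fin.ext (by simp; omega)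
    have h2 : (⟨1, by omega⟩ : Fin n) = a := (Fin.ext ha1).symm
    rw [h1, h2]
  by_cases ha2 : a.val = 2
  · rw [if_neg (by omega), if_neg (by omega), if_pos ha2]
    have h2 : (⟨2, by omega⟩ : Fin n) = a := (Fin.ext ha2).symm
    rw [phi_inr1, ← h2, fact2 i]
  · rw [if_neg (by omega), if_neg (by omega), if_neg (by omega)]
    by_cases hi1 : i.val = 1
    · rw [if_pos hi1]
      have hieq : i = ⟨1, by omega⟩ := Fin.ext hi1
      rw [hieq]
      exact (fact3 a (by omega)).symm
    · rw [if_neg hi1, phi_inr2]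
      have h1 : (⟨(⟨a.val - 3, by have := a.isLt; omega⟩ : Fin (n-3)).val + 3, by
        have := a.isLt; simp; omega⟩ : Fin n) = a := Fin.ext (by simp; omega)
      have h2 : (⟨(⟨i.val - 2, by have := i.isLt; omega⟩ : Fin (n-2)).val + 2, by
        have := i.isLt; simp; omega⟩ : Fin n) = i := Fin.ext (by simp; omega)
      rw [h1, h2]

def derEquiv {n : ℕ} (hn : 5 ≤ n) : (ix n → ℂ) ≃ₗ[ℂ] ↥(Der (g2 n)) :=
  LinearEquiv.ofLinear (psi hn) (phi hn)
    (LinearMap.ext fun D => Subtype.ext (psi0_phi hn D))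
    (LinearMap.ext fun f => phi_psi hn f)

set_option synthInstance.maxHeartbeats 1000000 in
set_option maxHeartbeats 1000000 in
lemma finrank_der {n : ℕ} (hn : 5 ≤ n) :
    Module.finrank ℂ ↥(Der (g2 n)) = n ^ 2 - 3 * n + 4 := by
  rw [← (derEquiv hn).finrank_eq, Module.finrank_fintype_fun_eq_card]
  simp only [ix, Fintype.card_sum, Fintype.card_prod, Fintype.card_fin]
  obtain ⟨m, rfl⟩ : ∃ m, n = m + 5 := ⟨n - 5, by omega⟩
  have h1 : m + 5 - 1 = m + 4 := by omega
  have h2 : m + 5 - 2 = m + 3 := by omega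
  have h3 : m + 5 - 3 = m + 2 := by omega
  rw [h1, h2, h3]
  have hle : 3 * (m + 5) ≤ (m + 5) ^ 2 := by nlinarith
  zify [hle]
  ring

lemma finrank_V {n : ℕ} : Module.finrank ℂ (V n) = n := by
  rw [Module.finrank_fintype_fun_eq_card, Fintype.card_fin]

lemma exists_abelian_ideal {n : ℕ} (hn : 5 ≤ n) :
    ∃ I : Submodule ℂ (V n), IsAbelianIdeal (g2 n) I ∧ Module.finrank ℂ I = n - 1 := by
  have h0n : 0 < n := by omega
  set p : V n →ₗ[ℂ] ℂ := LinearMap.proj (⟨0, h0n⟩ : Fin n) with hp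
  refine ⟨LinearMap.ker p, ⟨?_, ?_⟩, ?_⟩
  · intro x v hv
    rw [LinearMap.mem_ker] at hv ⊢
    rw [hp, LinearMap.proj_apply] at hv ⊢
    rw [g2_apply hn]
    rw [show v (⟨0, by omega⟩ : Fin n) = 0 from hv]
    simp [Amap_at0 hn]
  · intro v hv w hw
    rw [LinearMap.mem_ker, hp, LinearMap.proj_apply] at hv hw
    rw [g2_apply hn]
    rw [show v (⟨0, by omega⟩ : Fin n) = 0 from hv,
      show w (⟨0, by omega⟩ : Fin n) = 0 from hw]
    simp
  · have hsur : Function.Surjective p := by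
      intro c
      exact ⟨Pi.single ⟨0, h0n⟩ c, by simp [hp]⟩
    have hrn := LinearMap.finrank_range_add_finrank_ker p
    rw [LinearMap.range_eq_top.mpr hsur, finrank_top, finrank_V, Module.finrank_self] at hrn
    omega

lemma abelian_ideal_le {n : ℕ} (hn : 5 ≤ n) (I : Submodule ℂ (V n))
    (hI : IsAbelianIdeal (g2 n) I) : Module.finrank ℂ I ≤ n - 1 := by
  have hle : Module.finrank ℂ I ≤ n := by
    have := Submodule.finrank_le I
    rwa [finrank_V] at this
  rcases Nat.lt_or_ge (Module.finrank ℂ I) n with h | h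
  · omega
  · exfalso
    have htop : I = ⊤ := Submodule.eq_top_of_finrank_eq (by rw [finrank_V]; omega)
    have h01 := hI.2 (Pi.single ⟨0, by omega⟩ 1) (htop ▸ Submodule.mem_top)
      (Pi.single ⟨1, by omega⟩ 1) (htop ▸ Submodule.mem_top)
    rw [g2_apply hn, Amap_single1 hn, Amap_single0 hn] at h01
    have := congrFun h01 ⟨1, by omega⟩
    simp [Pi.single_apply] at this

/-- derivations and maximal abelian ideal of g2. -/
theorem der_ab_g2 (n : ℕ) (hn : 5 ≤ n)  :
    Module.finrank ℂ (Der (g2 n)) = n ^ 2 - 3 * n + 4 ∧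
    (∃ I : Submodule ℂ (V n), IsAbelianIdeal (g2 n) I ∧ Module.finrank ℂ I = n - 1) ∧
    (∀ I : Submodule ℂ (V n), IsAbelianIdeal (g2 n) I → Module.finrank ℂ I ≤ n - 1) :=
  ⟨finrank_der hn, exists_abelian_ideal hn, fun I hI => abelian_ideal_le hn I hI⟩
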